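/- Action of a paradifferential operator with a symbol of limited smoothness (Fourier-coefficient form): Let m ∈ ℝ, s ∈ ℝ, γ₀ > 1 and K > 0. Fix δ ∈ (0, 1/4] and a function χ : ℝ → ℝ with 0 ≤ χ ≤ 1 and χ(x) = 0 whenever |x| ≥ 1.9. For each n ∈ ℤ let b_n : ℝ → ℂ satisfy |b_n(ξ)| ≤ K·⟨n⟩^{−γ₀}·⟨ξ⟩^m for all ξ ∈ ℝ. Then there exists a constant C > 0, depending only on s, m, γ₀, δ, such that for every sequence v : ℤ → ℂ with ‖v‖_s < ∞, the sequence w defined by w_j := Σ_{k ∈ ℤ} χ((j−k)/(δ·⟨j+k⟩))·b_{j−k}((j+k)/2)·v_k (for each j this sum has only finitely many nonzero terms) satisfies ‖w‖_{s−m} ≤ C·K·‖v‖_s. -/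

import Mathlib

open ENNReal

/-- Comparability of powers with comparable bases. -/
lemma aux_rpow_comp {x y : ℝ} (t : ℝ) (hx : 1 ≤ x) (hy : 1 ≤ y)
    (hxy : x ≤ 4 * y) (hyx : y ≤ 4 * x) :
    x ^ t ≤ 4 ^ |t| * y ^ t := by
  have hx0 : (0:ℝ) < x := lt_of_lt_of_le one_pos hx
  have hy0 : (0:ℝ) < y := lt_of_lt_of_le one_pos hy
  rcases le_or_gt 0 t with ht | ht
  · rw [abs_of_nonneg ht]
    calc x ^ t ≤ (4 * y) ^ t := Real.rpow_le_rpow hx0.le hxy ht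
      _ = 4 ^ t * y ^ t := Real.mul_rpow (by norm_num) hy0.le
  · rw [abs_of_neg ht]
    have h1 : y / 4 ≤ x := by linarith
    calc x ^ t ≤ (y / 4) ^ t := Real.rpow_le_rpow_of_nonpos (by positivity) h1 ht.le
      _ = y ^ t / 4 ^ t := Real.div_rpow hy0.le (by norm_num : (0:ℝ) ≤ 4) t
      _ = 4 ^ (-t) * y ^ t := by
          rw [Real.rpow_neg (by norm_num : (0:ℝ) ≤ 4)]
          field_simp

/-- Geometry of the support region. -/
lemma aux_geom {p d : ℝ} (hd : |d| ≤ 0.475 * max 1 |p|) :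
    max 1 |(p + d) / 2| ≤ max 1 |p| ∧ max 1 |p| ≤ 4 * max 1 |(p + d) / 2| := by
  have h1 : (1:ℝ) ≤ max 1 |p| := le_max_left _ _
  have hp : |p| ≤ max 1 |p| := le_max_right _ _
  have habs2 : |(p + d) / 2| = |p + d| / 2 := by
    rw [abs_div]; norm_num
  have hub : |p + d| ≤ |p| + |d| := abs_add_le p d
  constructor
  · apply max_le h1
    rw [habs2]; linarith
  · rcases le_or_gt |p| 4 with h4 | h4
    · have hM : max 1 |p| ≤ 4 := max_le (by norm_num) h4
      have h1' : (1:ℝ) ≤ max 1 |(p + d) / 2| := le_max_left _ _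
      linarith
    · have hmp : max 1 |p| = |p| := max_eq_right (by linarith)
      have hlb : |p| - |d| ≤ |p + d| := by
        have := abs_sub_abs_le_abs_sub p (-d)
        simpa [sub_neg_eq_add] using this
      have h3 : |(p + d) / 2| ≤ max 1 |(p + d) / 2| := le_max_right _ _
      rw [hmp] at hd ⊢
      rw [habs2] at h3 ⊢
      linarith

/-- Elementary Cauchy-Schwarz-type termwise bound in `ℝ≥0∞`. -/
lemma aux_enn_cs {a₁ a₂ c₁ c₂ : ℝ} (ha₁ : 0 ≤ a₁) (ha₂ : 0 ≤ a₂)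
    (hc₁ : 0 ≤ c₁) (hc₂ : 0 ≤ c₂) :
    2 * ((ENNReal.ofReal a₁ * ENNReal.ofReal c₁) * (ENNReal.ofReal a₂ * ENNReal.ofReal c₂)) ≤
      ENNReal.ofReal a₁ * ENNReal.ofReal a₂ *
        ((ENNReal.ofReal c₁) ^ 2 + (ENNReal.ofReal c₂) ^ 2) := by
  have h : 2 * (a₁ * c₁ * (a₂ * c₂)) ≤ a₁ * a₂ * (c₁ ^ 2 + c₂ ^ 2) := by
    nlinarith [mul_nonneg ha₁ ha₂, sq_nonneg (c₁ - c₂)]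
  calc 2 * ((ENNReal.ofReal a₁ * ENNReal.ofReal c₁) * (ENNReal.ofReal a₂ * ENNReal.ofReal c₂))
      = ENNReal.ofReal (2 * (a₁ * c₁ * (a₂ * c₂))) := by
        rw [← ENNReal.ofReal_mul ha₁, ← ENNReal.ofReal_mul ha₂,
          ← ENNReal.ofReal_mul (by positivity : (0:ℝ) ≤ a₁ * c₁),
          ENNReal.ofReal_mul (by norm_num : (0:ℝ) ≤ 2), ENNReal.ofReal_ofNat]
    _ ≤ ENNReal.ofReal (a₁ * a₂ * (c₁ ^ 2 + c₂ ^ 2)) := ENNReal.ofReal_le_ofReal h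
    _ = ENNReal.ofReal a₁ * ENNReal.ofReal a₂ *
        ((ENNReal.ofReal c₁) ^ 2 + (ENNReal.ofReal c₂) ^ 2) := by
        rw [ENNReal.ofReal_mul (by positivity : (0:ℝ) ≤ a₁ * a₂),
          ENNReal.ofReal_mul ha₁,
          ENNReal.ofReal_add (by positivity) (by positivity),
          ENNReal.ofReal_pow hc₁, ENNReal.ofReal_pow hc₂]


/-- Discrete Young inequality `‖a ⋆ c‖_{ℓ²} ≤ ‖a‖_{ℓ¹} ‖c‖_{ℓ²}`, squared form. -/
lemma aux_l2_conv (a c : ℤ → ℝ) (ha0 : ∀ n, 0 ≤ a n) (ha1 : ∀ n, a n ≤ 1)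
    (hc0 : ∀ n, 0 ≤ c n) (ha : Summable a) (hc2 : Summable fun k => c k ^ 2)
    (w : ℤ → ℝ) (hw0 : ∀ j, 0 ≤ w j)
    (hwle : ∀ j, w j ≤ ∑' k, a (j - k) * c k) :
    Summable (fun j => w j ^ 2) ∧
      ∑' j, w j ^ 2 ≤ (∑' n, a n) ^ 2 * ∑' k, c k ^ 2 := by
  set a' : ℤ → ℝ≥0∞ := fun n => ENNReal.ofReal (a n) with ha'
  set c' : ℤ → ℝ≥0∞ := fun n => ENNReal.ofReal (c n) with hc'
  have hacsum : ∀ j : ℤ, Summable fun k => a (j - k) * c k := by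
    intro j
    have hsub : Summable fun k : ℤ => a (j - k) :=
      (ha.comp_injective (sub_right_injective)).congr fun k => rfl
    refine Summable.of_nonneg_of_le (fun k => mul_nonneg (ha0 _) (hc0 _)) (fun k => ?_)
      ((hsub.add hc2).mul_left (1/2 : ℝ))
    have h1 := ha0 (j - k); have h2 := ha1 (j - k); have h3 := hc0 k
    nlinarith [sq_nonneg (a (j - k) - c k)]
  have htA : ∀ j : ℤ, ∑' k, a' (j - k) = ∑' n, a' n := by
    intro j
    have := (Equiv.subLeft j).tsum_eq a'
    simpa [Equiv.subLeft_apply] using this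
  have htA2 : ∀ k : ℤ, ∑' j, a' (j - k) = ∑' n, a' n := by
    intro k
    have := (Equiv.subRight k).tsum_eq a'
    simpa [Equiv.subRight_apply] using this
  have hG : ∀ j : ℤ, ENNReal.ofReal (∑' k, a (j - k) * c k) = ∑' k, a' (j - k) * c' k := by
    intro j
    rw [ENNReal.ofReal_tsum_of_nonneg (fun k => mul_nonneg (ha0 _) (hc0 _)) (hacsum j)]
    exact tsum_congr fun k => ENNReal.ofReal_mul (ha0 _)
  have hCS : ∀ j : ℤ,
      (∑' k, a' (j - k) * c' k) ^ 2 ≤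
        (∑' n, a' n) * ∑' k, a' (j - k) * (c' k) ^ 2 := by
    intro j
    have hexp : (∑' k, a' (j - k) * c' k) ^ 2 =
        ∑' k : ℤ, ∑' l : ℤ, (a' (j - k) * c' k) * (a' (j - l) * c' l) := by
      rw [sq, ← ENNReal.tsum_mul_right]
      exact tsum_congr fun k => (ENNReal.tsum_mul_left).symm
    have h2 : 2 * (∑' k, a' (j - k) * c' k) ^ 2 ≤
        2 * ((∑' n, a' n) * ∑' k, a' (j - k) * (c' k) ^ 2) := by
      rw [hexp, ← ENNReal.tsum_mul_left]
      calc ∑' k : ℤ, 2 * ∑' l : ℤ, (a' (j - k) * c' k) * (a' (j - l) * c' l)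
          = ∑' k : ℤ, ∑' l : ℤ, 2 * ((a' (j - k) * c' k) * (a' (j - l) * c' l)) := by
            exact tsum_congr fun k => (ENNReal.tsum_mul_left).symm
        _ ≤ ∑' k : ℤ, ∑' l : ℤ,
              (a' (j - k) * a' (j - l) * ((c' k) ^ 2 + (c' l) ^ 2)) := by
            refine ENNReal.tsum_le_tsum fun k => ENNReal.tsum_le_tsum fun l => ?_
            exact aux_enn_cs (ha0 _) (ha0 _) (hc0 _) (hc0 _)
        _ = (∑' k : ℤ, ∑' l : ℤ, a' (j - k) * a' (j - l) * (c' k) ^ 2) +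
            (∑' k : ℤ, ∑' l : ℤ, a' (j - k) * a' (j - l) * (c' l) ^ 2) := by
            rw [← ENNReal.tsum_add]
            refine tsum_congr fun k => ?_
            rw [← ENNReal.tsum_add]
            exact tsum_congr fun l => by ring
        _ = 2 * ((∑' n, a' n) * ∑' k, a' (j - k) * (c' k) ^ 2) := by
            have e1 : (∑' k : ℤ, ∑' l : ℤ, a' (j - k) * a' (j - l) * (c' k) ^ 2) =
                (∑' n, a' n) * ∑' k, a' (j - k) * (c' k) ^ 2 := by
              calc ∑' k : ℤ, ∑' l : ℤ, a' (j - k) * a' (j - l) * (c' k) ^ 2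
                  = ∑' k : ℤ, (a' (j - k) * (c' k) ^ 2) * ∑' l : ℤ, a' (j - l) := by
                    refine tsum_congr fun k => ?_
                    rw [← ENNReal.tsum_mul_left]
                    exact tsum_congr fun l => by ring
                _ = (∑' n, a' n) * ∑' k, a' (j - k) * (c' k) ^ 2 := by
                    rw [ENNReal.tsum_mul_right, htA j, mul_comm]
            have e2 : (∑' k : ℤ, ∑' l : ℤ, a' (j - k) * a' (j - l) * (c' l) ^ 2) =
                (∑' n, a' n) * ∑' k, a' (j - k) * (c' k) ^ 2 := by
              calc ∑' k : ℤ, ∑' l : ℤ, a' (j - k) * a' (j - l) * (c' l) ^ 2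
                  = ∑' k : ℤ, a' (j - k) * ∑' l : ℤ, a' (j - l) * (c' l) ^ 2 := by
                    refine tsum_congr fun k => ?_
                    rw [← ENNReal.tsum_mul_left]
                    exact tsum_congr fun l => by ring
                _ = (∑' n, a' n) * ∑' k, a' (j - k) * (c' k) ^ 2 := by
                    rw [ENNReal.tsum_mul_right, htA j]
            rw [e1, e2, two_mul]
    exact (ENNReal.mul_le_mul_iff_right (by norm_num) ENNReal.ofNat_ne_top).mp h2
  have hS : ∑' j : ℤ, ∑' k : ℤ, a' (j - k) * (c' k) ^ 2 =
      (∑' n, a' n) * ∑' k, (c' k) ^ 2 := by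
    rw [ENNReal.tsum_comm]
    calc ∑' k : ℤ, ∑' j : ℤ, a' (j - k) * (c' k) ^ 2
        = ∑' k : ℤ, (∑' j : ℤ, a' (j - k)) * (c' k) ^ 2 :=
          tsum_congr fun k => ENNReal.tsum_mul_right
      _ = ∑' k : ℤ, (∑' n, a' n) * (c' k) ^ 2 := tsum_congr fun k => by rw [htA2 k]
      _ = (∑' n, a' n) * ∑' k, (c' k) ^ 2 := ENNReal.tsum_mul_left
  have hmain : ∑' j, ENNReal.ofReal (w j ^ 2) ≤ (∑' n, a' n) ^ 2 * ∑' k, (c' k) ^ 2 := by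
    calc ∑' j, ENNReal.ofReal (w j ^ 2)
        ≤ ∑' j : ℤ, (∑' n, a' n) * ∑' k, a' (j - k) * (c' k) ^ 2 := by
          refine ENNReal.tsum_le_tsum fun j => ?_
          rw [ENNReal.ofReal_pow (hw0 j)]
          refine le_trans ?_ (hCS j)
          have hle := ENNReal.ofReal_le_ofReal (hwle j)
          rw [hG j] at hle
          exact pow_le_pow_left' hle 2
      _ = (∑' n, a' n) * ∑' j : ℤ, ∑' k : ℤ, a' (j - k) * (c' k) ^ 2 :=
          ENNReal.tsum_mul_left
      _ = (∑' n, a' n) ^ 2 * ∑' k, (c' k) ^ 2 := by rw [hS, ← mul_assoc, sq]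
  have hAeq : (∑' n, a' n) = ENNReal.ofReal (∑' n, a n) :=
    (ENNReal.ofReal_tsum_of_nonneg ha0 ha).symm
  have hCeq : (∑' k, (c' k) ^ 2) = ENNReal.ofReal (∑' k, c k ^ 2) := by
    rw [ENNReal.ofReal_tsum_of_nonneg (fun k => sq_nonneg _) hc2]
    exact tsum_congr fun k => (ENNReal.ofReal_pow (hc0 k) 2).symm
  have hfin : ∑' j, ENNReal.ofReal (w j ^ 2) ≠ ⊤ := by
    refine ne_top_of_le_ne_top ?_ hmain
    rw [hAeq, hCeq]
    exact ENNReal.mul_ne_top (ENNReal.pow_ne_top ENNReal.ofReal_ne_top) ENNReal.ofReal_ne_top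
  have hsum : Summable fun j => w j ^ 2 := by
    have h2 : Summable fun j => (w j ^ 2).toNNReal :=
      ENNReal.tsum_coe_ne_top_iff_summable.mp hfin
    exact (NNReal.summable_coe.mpr h2).congr fun j => Real.coe_toNNReal _ (sq_nonneg (w j))
  refine ⟨hsum, ?_⟩
  have hofX : ENNReal.ofReal (∑' j, w j ^ 2) = ∑' j, ENNReal.ofReal (w j ^ 2) :=
    ENNReal.ofReal_tsum_of_nonneg (fun j => sq_nonneg _) hsum
  have hB : ((∑' n, a' n) ^ 2 * ∑' k, (c' k) ^ 2) =
      ENNReal.ofReal ((∑' n, a n) ^ 2 * ∑' k, c k ^ 2) := by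
    rw [hAeq, hCeq, ENNReal.ofReal_mul (by positivity),
      ENNReal.ofReal_pow (tsum_nonneg ha0)]
  have hfinal := hmain
  rw [← hofX, hB] at hfinal
  exact (ENNReal.ofReal_le_ofReal_iff
    (mul_nonneg (sq_nonneg _) (tsum_nonneg fun k => sq_nonneg _))).mp hfinal

lemma aux_summable_a (γ₀ : ℝ) (hγ₀ : 1 < γ₀) :
    Summable fun n : ℤ => (max 1 |(n : ℝ)|) ^ (-γ₀) := by
  have h1 : Summable fun n : ℤ => |(n : ℝ)| ^ (-γ₀) := Real.summable_abs_int_rpow hγ₀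
  have h2 : Summable fun n : ℤ => if n = 0 then (1 : ℝ) else 0 := by
    apply summable_of_ne_finset_zero (s := ({0} : Finset ℤ))
    intro n hn
    simp only [Finset.mem_singleton] at hn
    simp [hn]
  refine Summable.of_nonneg_of_le (fun n => by positivity) (fun n => ?_) (h1.add h2)
  by_cases hn : n = 0
  · subst hn
    simp [Real.zero_rpow (by linarith : -γ₀ ≠ 0), Real.one_rpow]
  · have h3 : (1 : ℝ) ≤ |(n : ℝ)| := by
      rw [← Int.cast_abs]
      exact_mod_cast Int.one_le_abs hn
    simp [max_eq_right h3, hn]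

lemma aux_key (m s γ₀ K δ : ℝ) (hδ0 : 0 < δ) (hδ1 : δ ≤ 1 / 4) (hK : 0 < K)
    (χ : ℝ → ℝ) (hχ0 : ∀ x, 0 ≤ χ x) (hχ1 : ∀ x, χ x ≤ 1)
    (hχs : ∀ x : ℝ, (1.9 : ℝ) ≤ |x| → χ x = 0)
    (b : ℤ → ℝ → ℂ)
    (hb : ∀ n : ℤ, ∀ ξ : ℝ,
      ‖b n ξ‖ ≤ K * (max 1 |(n : ℝ)|) ^ (-γ₀) * (max 1 |ξ|) ^ m)
    (v : ℤ → ℂ) (j k : ℤ) :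
    (max 1 |(j : ℝ)|) ^ (s - m) *
        ‖(χ (((j : ℝ) - (k : ℝ)) / (δ * max 1 |(j : ℝ) + (k : ℝ)|)) : ℂ) *
          b (j - k) (((j : ℝ) + (k : ℝ)) / 2) * v k‖ ≤
      (K * (4 ^ |m| * 4 ^ |s|)) *
        ((max 1 |((j - k : ℤ) : ℝ)|) ^ (-γ₀) *
          ((max 1 |(k : ℝ)|) ^ s * ‖v k‖)) := by
  set x : ℝ := ((j : ℝ) - (k : ℝ)) / (δ * max 1 |(j : ℝ) + (k : ℝ)|) with hx
  have hLP1 : (1 : ℝ) ≤ max 1 |(j : ℝ) + (k : ℝ)| := le_max_left _ _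
  have hLPpos : (0 : ℝ) < max 1 |(j : ℝ) + (k : ℝ)| := by linarith
  have haJK : (0 : ℝ) ≤ (max 1 |((j - k : ℤ) : ℝ)|) ^ (-γ₀) := by positivity
  have hVnn : (0 : ℝ) ≤ ‖v k‖ := norm_nonneg _
  by_cases hz : χ x = 0
  · rw [hz]
    simp only [Complex.ofReal_zero, zero_mul, map_zero, norm_zero, mul_zero]
    positivity
  · have hx19 : |x| < 1.9 := by
      by_contra hcon
      exact hz (hχs x (le_of_not_gt hcon))
    have hd : |(j : ℝ) - (k : ℝ)| ≤ 0.475 * max 1 |(j : ℝ) + (k : ℝ)| := by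
      have h1 : |x| = |(j : ℝ) - (k : ℝ)| / (δ * max 1 |(j : ℝ) + (k : ℝ)|) := by
        rw [hx, abs_div, abs_of_pos (show (0:ℝ) < δ * max 1 |(j : ℝ) + (k : ℝ)| by positivity)]
      have h2 : |(j : ℝ) - (k : ℝ)| < 1.9 * (δ * max 1 |(j : ℝ) + (k : ℝ)|) := by
        rw [h1] at hx19
        have := (div_lt_iff₀ (by positivity)).mp hx19
        linarith
      nlinarith
    obtain ⟨hj1, hj2⟩ := aux_geom hd
    have ej : ((j : ℝ) + (k : ℝ) + ((j : ℝ) - (k : ℝ))) / 2 = (j : ℝ) := by ring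
    rw [ej] at hj1 hj2
    obtain ⟨hk1, hk2⟩ := aux_geom (p := (j : ℝ) + (k : ℝ)) (d := -((j : ℝ) - (k : ℝ)))
      (by rwa [abs_neg])
    have ek : ((j : ℝ) + (k : ℝ) + -((j : ℝ) - (k : ℝ))) / 2 = (k : ℝ) := by ring
    rw [ek] at hk1 hk2
    -- half-point comparability
    have habs2 : |((j : ℝ) + (k : ℝ)) / 2| = |(j : ℝ) + (k : ℝ)| / 2 := by
      rw [abs_div]; norm_num
    have hu1 : max 1 |((j : ℝ) + (k : ℝ)) / 2| ≤ max 1 |(j : ℝ) + (k : ℝ)| := by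
      apply max_le hLP1
      rw [habs2]
      have := le_max_right (1 : ℝ) |(j : ℝ) + (k : ℝ)|
      have h0 : (0:ℝ) ≤ |(j : ℝ) + (k : ℝ)| := abs_nonneg _
      linarith
    have hu2 : max 1 |(j : ℝ) + (k : ℝ)| ≤ 4 * max 1 |((j : ℝ) + (k : ℝ)) / 2| := by
      have h1' : (1:ℝ) ≤ max 1 |((j : ℝ) + (k : ℝ)) / 2| := le_max_left _ _
      have h2' : |((j : ℝ) + (k : ℝ)) / 2| ≤ max 1 |((j : ℝ) + (k : ℝ)) / 2| :=
        le_max_right _ _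
      apply max_le <;> linarith [habs2]
    have hLj1 : (1 : ℝ) ≤ max 1 |(j : ℝ)| := le_max_left _ _
    have hLk1 : (1 : ℝ) ≤ max 1 |(k : ℝ)| := le_max_left _ _
    have hLjpos : (0 : ℝ) < max 1 |(j : ℝ)| := by linarith
    have hm2 : (max 1 |((j : ℝ) + (k : ℝ)) / 2|) ^ m ≤ 4 ^ |m| * (max 1 |(j : ℝ)|) ^ m :=
      aux_rpow_comp m (le_max_left _ _) hLj1 (hu1.trans hj2) (hj1.trans hu2)
    have hs2 : (max 1 |(j : ℝ)|) ^ s ≤ 4 ^ |s| * (max 1 |(k : ℝ)|) ^ s :=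
      aux_rpow_comp s hLj1 hLk1 (hj1.trans hk2) (hk1.trans hj2)
    have hb' := hb (j - k) (((j : ℝ) + (k : ℝ)) / 2)
    have hBnn : (0 : ℝ) ≤ ‖b (j - k) (((j : ℝ) + (k : ℝ)) / 2)‖ :=
      norm_nonneg _
    have hpow : (max 1 |(j : ℝ)|) ^ (s - m) * (max 1 |(j : ℝ)|) ^ m =
        (max 1 |(j : ℝ)|) ^ s := by
      rw [← Real.rpow_add hLjpos, sub_add_cancel]
    rw [norm_mul, norm_mul, Complex.norm_real, Real.norm_eq_abs, abs_of_nonneg (hχ0 x)]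
    set B := ‖b (j - k) (((j : ℝ) + (k : ℝ)) / 2)‖ with hB
    set V := ‖v k‖ with hV
    set aJK := (max 1 |((j - k : ℤ) : ℝ)|) ^ (-γ₀) with haJKd
    set U := max 1 |((j : ℝ) + (k : ℝ)) / 2| with hU
    set Lj := max 1 |(j : ℝ)| with hLj
    set Lk := max 1 |(k : ℝ)| with hLk
    have h4m : (0:ℝ) ≤ 4 ^ |m| := by positivity
    calc Lj ^ (s - m) * (χ x * B * V)
        ≤ Lj ^ (s - m) * (1 * (K * aJK * U ^ m) * V) := by
          apply mul_le_mul_of_nonneg_left _ (Real.rpow_nonneg hLjpos.le _)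
          apply mul_le_mul_of_nonneg_right _ hVnn
          exact mul_le_mul (hχ1 x) hb' hBnn zero_le_one
      _ = (K * aJK * V) * (Lj ^ (s - m) * U ^ m) := by ring
      _ ≤ (K * aJK * V) * (Lj ^ (s - m) * (4 ^ |m| * Lj ^ m)) := by
          apply mul_le_mul_of_nonneg_left _ (by positivity)
          exact mul_le_mul_of_nonneg_left hm2 (Real.rpow_nonneg hLjpos.le _)
      _ = (K * aJK * V) * 4 ^ |m| * (Lj ^ (s - m) * Lj ^ m) := by ring
      _ = (K * aJK * V) * 4 ^ |m| * Lj ^ s := by rw [hpow]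
      _ ≤ (K * aJK * V) * 4 ^ |m| * (4 ^ |s| * Lk ^ s) := by
          apply mul_le_mul_of_nonneg_left hs2 (by positivity)
      _ = (K * (4 ^ |m| * 4 ^ |s|)) * (aJK * (Lk ^ s * V)) := by ring

/-- The `H^s` Sobolev norm of a sequence of Fourier coefficients. -/
noncomputable def Hnorm (s : ℝ) (u : ℤ → ℂ) : ℝ :=
  Real.sqrt (∑' j : ℤ, (max 1 |(j : ℝ)|) ^ (2 * s) * ‖u j‖ ^ 2)

/-- Finiteness of the `H^s` Sobolev norm of a sequence of Fourier coefficients. -/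
def HSummable (s : ℝ) (u : ℤ → ℂ) : Prop :=
  Summable fun j : ℤ => (max 1 |(j : ℝ)|) ^ (2 * s) * ‖u j‖ ^ 2

/-- The Fourier coefficients of the Bony-Weyl paradifferential operator with symbol of
spatial Fourier coefficients `b_n(ξ)` applied to `v`, with cut-off `χ(·/δ·)`. -/
noncomputable def paraWn (δ : ℝ) (χ : ℝ → ℝ) (b : ℤ → ℝ → ℂ) (v : ℤ → ℂ) (j : ℤ) : ℂ :=
  ∑' k : ℤ,
    (χ (((j : ℝ) - (k : ℝ)) / (δ * max 1 |(j : ℝ) + (k : ℝ)|)) : ℂ) *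
      b (j - k) (((j : ℝ) + (k : ℝ)) / 2) * v k

/-- Action of a paradifferential operator with a symbol of limited smoothness
(Fourier-coefficient form): `‖Op^{BW}(b)v‖_{s-m} ≤ C K ‖v‖_s`. -/
theorem paradifferential_action_limited_smoothness (m s γ₀ : ℝ) (hγ₀ : 1 < γ₀)
    (δ : ℝ) (hδ0 : 0 < δ) (hδ1 : δ ≤ 1 / 4) :
    ∃ C : ℝ, 0 < C ∧
      ∀ χ : ℝ → ℝ, (∀ x : ℝ, 0 ≤ χ x) → (∀ x : ℝ, χ x ≤ 1) →
        (∀ x : ℝ, (1.9 : ℝ) ≤ |x| → χ x = 0) →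
      ∀ K : ℝ, 0 < K →
      ∀ b : ℤ → ℝ → ℂ,
        (∀ n : ℤ, ∀ ξ : ℝ,
          ‖b n ξ‖ ≤ K * (max 1 |(n : ℝ)|) ^ (-γ₀) * (max 1 |ξ|) ^ m) →
      ∀ v : ℤ → ℂ, HSummable s v →
        HSummable (s - m) (paraWn δ χ b v) ∧
          Hnorm (s - m) (paraWn δ χ b v) ≤ C * K * Hnorm s v := by
  have ha : Summable fun n : ℤ => (max 1 |(n : ℝ)|) ^ (-γ₀) := aux_summable_a γ₀ hγ₀
  have ha0 : ∀ n : ℤ, (0:ℝ) ≤ (max 1 |(n : ℝ)|) ^ (-γ₀) := fun n => by positivity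
  have ha1 : ∀ n : ℤ, (max 1 |(n : ℝ)|) ^ (-γ₀) ≤ 1 := fun n =>
    Real.rpow_le_one_of_one_le_of_nonpos (le_max_left _ _) (by linarith)
  set A : ℝ := ∑' n : ℤ, (max 1 |(n : ℝ)|) ^ (-γ₀) with hA
  have hA0 : 0 < A := by
    refine Summable.tsum_pos ha ha0 0 ?_
    norm_num
  refine ⟨4 ^ |m| * 4 ^ |s| * A, by positivity, ?_⟩
  intro χ hχ0 hχ1 hχs K hK b hb v hv
  set c : ℤ → ℝ := fun k => (max 1 |(k : ℝ)|) ^ s * ‖v k‖ with hc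
  have hc0 : ∀ k, 0 ≤ c k := fun k =>
    mul_nonneg (by positivity) (norm_nonneg _)
  have hsq : ∀ (t : ℝ) (k : ℤ),
      ((max 1 |(k : ℝ)|) ^ t) ^ 2 = (max 1 |(k : ℝ)|) ^ (2 * t) := by
    intro t k
    rw [← Real.rpow_natCast ((max 1 |(k : ℝ)|) ^ t) 2, ← Real.rpow_mul (by positivity)]
    norm_num [mul_comm]
  have hc2 : Summable fun k => c k ^ 2 := by
    refine hv.congr fun k => ?_
    simp only [hc]
    rw [mul_pow, hsq s k]
  set Kc : ℝ := K * (4 ^ |m| * 4 ^ |s|) with hKc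
  have hKc0 : 0 < Kc := by rw [hKc]; positivity
  set F : ℤ → ℤ → ℂ := fun j k =>
    (χ (((j : ℝ) - (k : ℝ)) / (δ * max 1 |(j : ℝ) + (k : ℝ)|)) : ℂ) *
      b (j - k) (((j : ℝ) + (k : ℝ)) / 2) * v k with hF
  have hwF : ∀ j, paraWn δ χ b v j = ∑' k, F j k := fun j => rfl
  have key : ∀ j k : ℤ,
      (max 1 |(j : ℝ)|) ^ (s - m) * ‖F j k‖ ≤
        Kc * ((max 1 |((j - k : ℤ) : ℝ)|) ^ (-γ₀) * c k) :=
    fun j k => aux_key m s γ₀ K δ hδ0 hδ1 hK χ hχ0 hχ1 hχs b hb v j k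
  have haS : ∀ j : ℤ, Summable fun k : ℤ => (max 1 |((j - k : ℤ) : ℝ)|) ^ (-γ₀) := by
    intro j
    exact (ha.comp_injective sub_right_injective).congr fun k => rfl
  have hac : ∀ j : ℤ, Summable fun k : ℤ => (max 1 |((j - k : ℤ) : ℝ)|) ^ (-γ₀) * c k := by
    intro j
    refine Summable.of_nonneg_of_le (fun k => mul_nonneg (ha0 _) (hc0 _)) (fun k => ?_)
      (((haS j).add hc2).mul_left (1/2 : ℝ))
    have h1 := ha0 (j - k); have h2 := ha1 (j - k); have h3 := hc0 k
    nlinarith [sq_nonneg ((max 1 |((j - k : ℤ) : ℝ)|) ^ (-γ₀) - c k)]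
  have hFnorm : ∀ j : ℤ, Summable fun k => ‖F j k‖ := by
    intro j
    have hLjpos : (0:ℝ) < max 1 |(j:ℝ)| := lt_of_lt_of_le one_pos (le_max_left _ _)
    refine Summable.of_nonneg_of_le (fun k => norm_nonneg _) (fun k => ?_)
      (((hac j).mul_left Kc).mul_left ((max 1 |(j:ℝ)|) ^ (m - s)))
    have hone : (max 1 |(j:ℝ)|) ^ (m - s) * (max 1 |(j:ℝ)|) ^ (s - m) = 1 := by
      rw [← Real.rpow_add hLjpos]; norm_num
    calc ‖F j k‖
        = ((max 1 |(j:ℝ)|) ^ (m - s) * (max 1 |(j:ℝ)|) ^ (s - m)) * ‖F j k‖ := by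
          rw [hone, one_mul]
      _ = (max 1 |(j:ℝ)|) ^ (m - s) *
          ((max 1 |(j:ℝ)|) ^ (s - m) * ‖F j k‖) := by ring
      _ ≤ (max 1 |(j:ℝ)|) ^ (m - s) *
          (Kc * ((max 1 |((j - k : ℤ) : ℝ)|) ^ (-γ₀) * c k)) :=
          mul_le_mul_of_nonneg_left (key j k) (Real.rpow_nonneg hLjpos.le _)
  set W : ℤ → ℝ := fun j => (max 1 |(j:ℝ)|) ^ (s - m) * ‖paraWn δ χ b v j‖
    with hW
  have hW0 : ∀ j, 0 ≤ W j := fun j =>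
    mul_nonneg (by positivity) (norm_nonneg _)
  have hWle : ∀ j : ℤ,
      W j ≤ ∑' k, (max 1 |((j - k : ℤ) : ℝ)|) ^ (-γ₀) * (Kc * c k) := by
    intro j
    have h1 : ‖paraWn δ χ b v j‖ ≤ ∑' k, ‖F j k‖ := by
      rw [hwF j]
      simpa using
        norm_tsum_le_tsum_norm (hFnorm j)
    calc W j = (max 1 |(j:ℝ)|) ^ (s - m) * ‖paraWn δ χ b v j‖ := rfl
      _ ≤ (max 1 |(j:ℝ)|) ^ (s - m) * ∑' k, ‖F j k‖ :=
          mul_le_mul_of_nonneg_left h1 (by positivity)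
      _ = ∑' k, (max 1 |(j:ℝ)|) ^ (s - m) * ‖F j k‖ := tsum_mul_left.symm
      _ ≤ ∑' k, (max 1 |((j - k : ℤ) : ℝ)|) ^ (-γ₀) * (Kc * c k) := by
          refine Summable.tsum_le_tsum (fun k => (key j k).trans_eq (by ring))
            (((hFnorm j).mul_left _)) (((hac j).mul_left Kc).congr fun k => by ring)
  obtain ⟨hsum2, hle2⟩ := aux_l2_conv (fun n => (max 1 |(n : ℝ)|) ^ (-γ₀))
    (fun k => Kc * c k) ha0 ha1 (fun k => mul_nonneg hKc0.le (hc0 k)) ha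
    ((hc2.mul_left (Kc ^ 2)).congr fun k => by ring) W hW0 hWle
  constructor
  · exact hsum2.congr fun j => by simp only [hW]; rw [mul_pow, hsq (s - m) j]
  · have heq1 : ∑' j : ℤ, (max 1 |(j:ℝ)|) ^ (2 * (s - m)) *
        ‖paraWn δ χ b v j‖ ^ 2 = ∑' j, W j ^ 2 :=
      tsum_congr fun j => by simp only [hW]; rw [mul_pow, hsq (s - m) j]
    have heq2 : ∑' k : ℤ, (Kc * c k) ^ 2 =
        Kc ^ 2 * ∑' k : ℤ, (max 1 |(k:ℝ)|) ^ (2 * s) * ‖v k‖ ^ 2 := by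
      rw [← tsum_mul_left]
      refine tsum_congr fun k => ?_
      have hck : c k ^ 2 = (max 1 |(k:ℝ)|) ^ (2 * s) * ‖v k‖ ^ 2 := by
        simp only [hc]; rw [mul_pow, hsq s k]
      rw [mul_pow, hck]
    unfold Hnorm
    rw [heq1]
    set Y := ∑' k : ℤ, (max 1 |(k:ℝ)|) ^ (2 * s) * ‖v k‖ ^ 2 with hY
    have hY0 : 0 ≤ Y := tsum_nonneg fun k => by positivity
    have hle3 : ∑' j, W j ^ 2 ≤ (A * Kc) ^ 2 * Y := by
      calc ∑' j, W j ^ 2 ≤ A ^ 2 * ∑' k, (Kc * c k) ^ 2 := hle2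
        _ = (A * Kc) ^ 2 * Y := by rw [heq2]; ring
    calc Real.sqrt (∑' j, W j ^ 2) ≤ Real.sqrt ((A * Kc) ^ 2 * Y) :=
          Real.sqrt_le_sqrt hle3
      _ = |A * Kc| * Real.sqrt Y := by
          rw [Real.sqrt_mul (sq_nonneg _), Real.sqrt_sq_eq_abs]
      _ = 4 ^ |m| * 4 ^ |s| * A * K * Real.sqrt Y := by
          rw [abs_of_nonneg (mul_nonneg hA0.le hKc0.le), hKc]; ring
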